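/- Let d ≥ 2, let θ₀, θ₁ ∈ ℝ, and let A₀ : S¹ → GL_d(ℝ) be a continuous map. Then the set of continuous maps A₁ : S¹ → GL_d(ℝ) that are twisting with respect to A₀ is dense in the space of continuous maps S¹ → GL_d(ℝ) equipped with the uniform distance d_{C⁰}(A,B) = sup_t ‖A(t) − B(t)‖. -/

import Mathlib

open MeasureTheory Filter
open scoped Matrix.Norms.L2Operator

/-- The twisting condition for the random product of quasi-periodic cocycles: for every pair
of nonempty subsets `I, J ⊆ {1,…,d}` with `|I| = |J|`, the function
`t ↦ |log |det((A₀(h(t))⁻¹ A₁(t))_{I,J})||` is integrable on `[0,1]`, where `h(t) = t+θ₁−θ₀`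
and `M_{I,J}` is the square submatrix of `M` with rows in `I` and columns in `J`. -/
def Twisting {d : ℕ} (θ₀ θ₁ : ℝ) (A₀ A₁ : ℝ → Matrix (Fin d) (Fin d) ℝ) : Prop :=
  ∀ (I J : Finset (Fin d)), I.Nonempty → ∀ h : J.card = I.card,
    IntegrableOn
      (fun t : ℝ => abs (Real.log (abs
        ((((A₀ (t + θ₁ - θ₀))⁻¹ * A₁ t)).submatrix
            (fun a : Fin I.card => (I.orderIsoOfFin rfl a).1)
            (fun b : Fin I.card => (J.orderIsoOfFin h b).1)).det)))
      (Set.Icc (0:ℝ) 1) volume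

/-- A continuous map `S¹ → GL_d(ℝ)`: continuous, 1-periodic, invertible values. -/
def IsC0GL {d : ℕ} (A : ℝ → Matrix (Fin d) (Fin d) ℝ) : Prop :=
  Continuous A ∧ (∀ t, A (t + 1) = A t) ∧ ∀ t, (A t).det ≠ 0

/-- Uniform distance `sup_t ‖A(t) − B(t)‖` (ℓ²-operator norm). -/
noncomputable def dC0Map {d : ℕ} (A B : ℝ → Matrix (Fin d) (Fin d) ℝ) : ℝ :=
  ⨆ t : Set.Icc (0:ℝ) 1, ‖A t - B t‖


section TwistingAux
open Real

variable {d : ℕ}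

theorem TwAux.myLogInt (M : ℝ) (hM : 0 ≤ M) : IntervalIntegrable Real.log volume 0 M := by
  rw [intervalIntegrable_iff_integrableOn_Ioc_of_le hM]
  have hrpow : IntegrableOn (fun x : ℝ => x ^ (-(1:ℝ)/2)) (Set.Ioc 0 M) volume := by
    have := (intervalIntegral.intervalIntegrable_rpow' (a := 0) (b := M)
      (r := -(1:ℝ)/2) (by norm_num))
    rwa [intervalIntegrable_iff_integrableOn_Ioc_of_le hM] at this
  have hg : IntegrableOn (fun x : ℝ => 2 * x ^ (-(1:ℝ)/2) + M) (Set.Ioc 0 M) volume :=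
    (hrpow.const_mul 2).add (integrableOn_const measure_Ioc_lt_top.ne)
  refine Integrable.mono' hg ?_ ?_
  · exact (Real.measurable_log.aestronglyMeasurable).restrict
  · refine (ae_restrict_iff' measurableSet_Ioc).mpr (ae_of_all _ fun x hx => ?_)
    rcases hx with ⟨hx0, hxM⟩
    rcases le_or_gt x 1 with h1 | h1
    · have : |Real.log x| = -Real.log x := abs_of_nonpos (Real.log_nonpos (le_of_lt hx0) h1)
      rw [Real.norm_eq_abs, this]
      have h2 : -Real.log x = 2 * Real.log (x ^ (-(1:ℝ)/2)) := by
        rw [Real.log_rpow hx0]; ring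
      rw [h2]
      have h3 : Real.log (x ^ (-(1:ℝ)/2)) ≤ x ^ (-(1:ℝ)/2) :=
        (Real.log_le_sub_one_of_pos (Real.rpow_pos_of_pos hx0 _)).trans (by linarith)
      nlinarith [Real.rpow_pos_of_pos hx0 (-(1:ℝ)/2)]
    · have : |Real.log x| = Real.log x := abs_of_nonneg (Real.log_nonneg h1.le)
      rw [Real.norm_eq_abs, this]
      have h3 : Real.log x ≤ x - 1 := Real.log_le_sub_one_of_pos (by linarith)
      have h4 : (0:ℝ) ≤ 2 * x ^ (-(1:ℝ)/2) := by positivity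
      linarith

theorem logIntAll (a b : ℝ) : IntervalIntegrable Real.log volume a b := by
  have key : ∀ c : ℝ, IntervalIntegrable Real.log volume 0 c := by
    intro c
    rcases le_or_gt 0 c with h | h
    · exact TwAux.myLogInt c h
    · have h2 := (IntervalIntegrable.iff_comp_neg (by simp)).mp (TwAux.myLogInt (-c) (by linarith))
      have h3 : (fun x : ℝ => Real.log (-x)) = Real.log := by
        funext x; exact Real.log_neg_eq_log x
      rw [h3] at h2
      simpa using h2
  exact (key a).symm.trans (key b)

theorem logSubInt (a b r : ℝ) : IntervalIntegrable (fun t => Real.log (t - r)) volume a b := by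
  have := (logIntAll (a - r) (b - r)).comp_sub_right r
  simpa using this

theorem polyLogIntAux (a b : ℝ) : ∀ (n : ℕ) (p : Polynomial ℝ), p ≠ 0 → p.roots.card = n →
    IntervalIntegrable (fun t => Real.log |p.eval t|) volume a b := by
  intro n
  induction n with
  | zero =>
    intro p hp hcard
    have hne : ∀ t : ℝ, p.eval t ≠ 0 := by
      intro t ht
      have : t ∈ p.roots := by
        rw [Polynomial.mem_roots hp]; exact ht
      have := Multiset.card_pos_iff_exists_mem.mpr ⟨t, this⟩
      omega
    refine Continuous.intervalIntegrable ?_ a b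
    exact Continuous.log (continuous_abs.comp p.continuous)
      (fun t => abs_ne_zero.mpr (hne t))
  | succ n ih =>
    intro p hp hcard
    obtain ⟨r, hr⟩ : ∃ r, r ∈ p.roots := Multiset.card_pos_iff_exists_mem.mp (by omega)
    have hroot : p.IsRoot r := (Polynomial.mem_roots hp).mp hr
    obtain ⟨q, hq⟩ : (Polynomial.X - Polynomial.C r) ∣ p := Polynomial.dvd_iff_isRoot.mpr hroot
    have hq0 : q ≠ 0 := by rintro rfl; simp at hq; exact hp hq
    have hcards : q.roots.card = n := by
      have : p.roots = r ::ₘ q.roots := by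
        rw [hq, Polynomial.roots_mul (by rw [← hq]; exact hp), Polynomial.roots_X_sub_C]
        rfl
      rw [this] at hcard
      simpa using hcard
    have h1 : IntervalIntegrable (fun t => Real.log (t - r) + Real.log |q.eval t|) volume a b :=
      (logSubInt a b r).add (ih q hq0 hcards)
    have hfin : (({r} : Set ℝ) ∪ {x | q.IsRoot x}).Finite :=
      (Set.finite_singleton r).union (q.finite_setOf_isRoot hq0)
    have h0 : ∀ᵐ (t : ℝ), t ∉ (({r} : Set ℝ) ∪ {x | q.IsRoot x}) :=
      measure_eq_zero_iff_ae_notMem.mp (hfin.measure_zero volume)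
    have hae : (fun t => Real.log (t - r) + Real.log |q.eval t|) =ᵐ[volume]
        (fun t => Real.log |p.eval t|) := by
      filter_upwards [h0] with t ht
      rw [Set.mem_union, Set.mem_singleton_iff] at ht
      push_neg at ht
      have ht1 : t - r ≠ 0 := sub_ne_zero.mpr ht.1
      have ht2 : q.eval t ≠ 0 := ht.2
      rw [hq, Polynomial.eval_mul, Polynomial.eval_sub, Polynomial.eval_X, Polynomial.eval_C,
        abs_mul, Real.log_mul (abs_ne_zero.mpr ht1) (abs_ne_zero.mpr ht2), Real.log_abs, Real.log_abs]
    exact h1.congr_ae (hae.filter_mono (ae_mono Measure.restrict_le_self))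

theorem polyAbsLogInt (a b : ℝ) (hab : a ≤ b) (p : Polynomial ℝ) (hp : p ≠ 0) :
    IntegrableOn (fun t => |Real.log (|p.eval t|)|) (Set.Icc a b) volume := by
  have := (polyLogIntAux a b p.roots.card p hp rfl)
  rw [intervalIntegrable_iff_integrableOn_Icc_of_le hab] at this
  exact this.abs


noncomputable def minorFn (I J : Finset (Fin d)) (h : J.card = I.card)
    (M : Matrix (Fin d) (Fin d) ℝ) : ℝ :=
  (M.submatrix (fun a : Fin I.card => ((I.orderIsoOfFin rfl a) : Fin d))
    (fun b : Fin I.card => ((J.orderIsoOfFin h b) : Fin d))).det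

abbrev MinorIdx (d : ℕ) := {p : Finset (Fin d) × Finset (Fin d) // p.2.card = p.1.card}

noncomputable def minorIdxFn (τ : MinorIdx d) (M : Matrix (Fin d) (Fin d) ℝ) : ℝ :=
  minorFn τ.1.1 τ.1.2 τ.2 M

theorem exists_poly (X N : Matrix (Fin d) (Fin d) ℝ) {k : ℕ} (f g : Fin k → Fin d) :
    ∃ p : Polynomial ℝ, ∀ s : ℝ, p.eval s = (((X + s • N)).submatrix f g).det := by
  refine ⟨((X.map Polynomial.C + (Polynomial.X : Polynomial ℝ) • N.map Polynomial.C).submatrix f g).det, fun s => ?_⟩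
  have h := RingHom.map_det (Polynomial.evalRingHom s)
    ((X.map Polynomial.C + (Polynomial.X : Polynomial ℝ) • N.map Polynomial.C).submatrix f g)
  rw [Polynomial.coe_evalRingHom] at h
  rw [h]
  congr 1
  ext i j
  simp only [RingHom.mapMatrix_apply, Matrix.map_apply, Matrix.submatrix_apply,
    Matrix.add_apply, Matrix.smul_apply, smul_eq_mul, Polynomial.coe_evalRingHom,
    Polynomial.eval_add, Polynomial.eval_mul, Polynomial.eval_C, Polynomial.eval_X]

theorem exists_poly' (X N : Matrix (Fin d) (Fin d) ℝ) (τ : MinorIdx d) :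
    ∃ p : Polynomial ℝ, ∀ s : ℝ, p.eval s = minorIdxFn τ (X + s • N) :=
  exists_poly X N _ _

/-- A matrix whose (I,J) minor equals 1. -/
noncomputable def unitMinorMat (I J : Finset (Fin d)) (h : J.card = I.card) :
    Matrix (Fin d) (Fin d) ℝ := fun i j =>
  if ∃ c : Fin I.card, ((I.orderIsoOfFin rfl c) : Fin d) = i ∧ ((J.orderIsoOfFin h c) : Fin d) = j
  then 1 else 0

theorem minor_unitMinorMat (I J : Finset (Fin d)) (h : J.card = I.card) :
    minorFn I J h (unitMinorMat I J h) = 1 := by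
  have : (unitMinorMat I J h).submatrix
      (fun a : Fin I.card => ((I.orderIsoOfFin rfl a) : Fin d))
      (fun b : Fin I.card => ((J.orderIsoOfFin h b) : Fin d)) = 1 := by
    ext a b
    simp only [Matrix.submatrix_apply, unitMinorMat, Matrix.one_apply]
    by_cases hab : a = b
    · subst hab
      rw [if_pos ⟨a, rfl, rfl⟩, if_pos rfl]
    · rw [if_neg, if_neg hab]
      rintro ⟨c, hc1, hc2⟩
      apply hab
      have hca : c = a := by
        have := Subtype.coe_injective hc1
        exact (OrderIso.injective _) this
      subst hca
      have := Subtype.coe_injective hc2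
      exact (OrderIso.injective _) this
  rw [minorFn, this, Matrix.det_one]

theorem exists_allminors_on (F : Finset (MinorIdx d)) :
    ∃ Y : Matrix (Fin d) (Fin d) ℝ, ∀ τ ∈ F, minorIdxFn τ Y ≠ 0 := by
  induction F using Finset.induction_on with
  | empty => exact ⟨0, by simp⟩
  | insert _ _ hτF ih =>
    rename_i τ₀ F
    obtain ⟨Y, hY⟩ := ih
    set U := unitMinorMat τ₀.1.1 τ₀.1.2 τ₀.2 with hU
    choose P hP using fun τ : MinorIdx d => exists_poly' Y (U - Y) τ
    have hP0 : ∀ τ ∈ insert τ₀ F, P τ ≠ 0 := by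
      intro τ hτ
      rcases Finset.mem_insert.mp hτ with rfl | hτF'
      · intro hzero
        have := hP τ 1
        rw [hzero] at this
        simp only [Polynomial.eval_zero, one_smul, add_sub_cancel] at this
        have h1 := minor_unitMinorMat τ.1.1 τ.1.2 τ.2
        rw [minorIdxFn] at this
        rw [← this] at h1
        norm_num at h1
      · intro hzero
        have := hP τ 0
        rw [hzero] at this
        simp only [Polynomial.eval_zero, zero_smul, add_zero] at this
        exact hY τ hτF' this.symm
    have hB : (⋃ τ ∈ (insert τ₀ F : Finset (MinorIdx d)), {s : ℝ | (P τ).IsRoot s}).Finite :=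
      Set.Finite.biUnion (insert τ₀ F).finite_toSet
        (fun τ hτ => Polynomial.finite_setOf_isRoot (hP0 τ hτ))
    obtain ⟨s, hs⟩ := hB.infinite_compl.nonempty
    refine ⟨Y + s • (U - Y), fun τ hτ => ?_⟩
    rw [← hP τ s]
    intro hzero
    apply hs
    exact Set.mem_biUnion hτ hzero

theorem allminors_dense (M : Matrix (Fin d) (Fin d) ℝ) (ε : ℝ) (hε : 0 < ε) :
    ∃ M' : Matrix (Fin d) (Fin d) ℝ, ‖M' - M‖ < ε ∧ ∀ τ : MinorIdx d, minorIdxFn τ M' ≠ 0 := by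
  obtain ⟨Y, hY⟩ := exists_allminors_on (Finset.univ : Finset (MinorIdx d))
  choose P hP using fun τ : MinorIdx d => exists_poly' M (Y - M) τ
  have hP0 : ∀ τ : MinorIdx d, P τ ≠ 0 := by
    intro τ hzero
    have := hP τ 1
    rw [hzero] at this
    simp only [Polynomial.eval_zero, one_smul, add_sub_cancel] at this
    exact hY τ (Finset.mem_univ τ) this.symm
  have hB : (⋃ τ : MinorIdx d, {s : ℝ | (P τ).IsRoot s}).Finite :=
    Set.finite_iUnion (fun τ => Polynomial.finite_setOf_isRoot (hP0 τ))
  set δ := ε / (‖Y - M‖ + 1) with hδ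
  have hδ0 : 0 < δ := by positivity
  obtain ⟨s, hs⟩ := ((Set.Ioo_infinite hδ0).diff hB).nonempty
  obtain ⟨⟨hs0, hsδ⟩, hsB⟩ := hs
  refine ⟨M + s • (Y - M), ?_, fun τ => ?_⟩
  · rw [add_sub_cancel_left, norm_smul, Real.norm_eq_abs, abs_of_pos hs0]
    calc s * ‖Y - M‖ ≤ s * (‖Y - M‖ + 1) := by nlinarith [norm_nonneg (Y - M)]
    _ < δ * (‖Y - M‖ + 1) := by nlinarith [norm_nonneg (Y - M)]
    _ = ε := by rw [hδ]; field_simp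
  · rw [← hP τ s]
    intro hzero
    exact hsB (Set.mem_iUnion.mpr ⟨τ, hzero⟩)

noncomputable def hatF (n i : ℕ) (t : ℝ) : ℝ := max 0 (1 - |(n:ℝ)*t - (i:ℝ)|)

noncomputable def plF (n : ℕ) (V : ℕ → Matrix (Fin d) (Fin d) ℝ) (t : ℝ) :
    Matrix (Fin d) (Fin d) ℝ := ∑ i ∈ Finset.range (n+1), hatF n i t • V i

theorem hatF_cont (n i : ℕ) : Continuous (hatF n i) := by
  unfold hatF; fun_prop

theorem plF_cont (n : ℕ) (V : ℕ → Matrix (Fin d) (Fin d) ℝ) : Continuous (plF n V) := by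
  unfold plF
  exact continuous_finset_sum _ (fun i _ => (hatF_cont n i).smul continuous_const)

theorem plF_piece (n i : ℕ) (hn : 0 < n) (hi : i < n) (V : ℕ → Matrix (Fin d) (Fin d) ℝ) {t : ℝ}
    (h1 : (i:ℝ)/n ≤ t) (h2 : t ≤ ((i:ℝ)+1)/n) :
    plF n V t = (1 - ((n:ℝ)*t - i)) • V i + ((n:ℝ)*t - i) • V (i+1) := by
  have hn' : (0:ℝ) < n := by exact_mod_cast hn
  have hs0 : 0 ≤ (n:ℝ)*t - i := by
    rw [div_le_iff₀ hn'] at h1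
    nlinarith
  have hs1 : (n:ℝ)*t - i ≤ 1 := by
    rw [le_div_iff₀ hn'] at h2
    nlinarith
  have hsub : ({i, i+1} : Finset ℕ) ⊆ Finset.range (n+1) := by
    intro j hj
    simp only [Finset.mem_insert, Finset.mem_singleton] at hj
    rcases hj with rfl | rfl <;> simp [Finset.mem_range] <;> omega
  rw [plF, ← Finset.sum_subset hsub]
  · rw [Finset.sum_pair (by omega : i ≠ i + 1)]
    have hhi : hatF n i t = 1 - ((n:ℝ)*t - i) := by
      rw [hatF, abs_of_nonneg hs0, max_eq_right (by linarith)]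
    have hhi1 : hatF n (i+1) t = (n:ℝ)*t - i := by
      rw [hatF]
      have hc : ((i+1 : ℕ) : ℝ) = (i:ℝ)+1 := by push_cast; ring
      rw [hc]
      have habs : |(n:ℝ)*t - ((i:ℝ)+1)| = 1 - ((n:ℝ)*t - i) := by
        rw [abs_of_nonpos (by linarith)]; ring
      rw [habs, max_eq_right (by linarith)]
      ring
    rw [hhi, hhi1]
  · intro j hjr hj
    simp only [Finset.mem_insert, Finset.mem_singleton] at hj
    push_neg at hj
    have habs : 1 - |(n:ℝ)*t - (j:ℝ)| ≤ 0 := by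
      rcases lt_or_gt_of_ne hj.1 with hji | hji
    -- j < i or j > i, and j ≠ i+1 so j ≥ i+2 in the second case
      · have hji' : j + 1 ≤ i := hji
        have hjr' : (j:ℝ) + 1 ≤ (i:ℝ) := by exact_mod_cast hji'
        have : (n:ℝ)*t - j ≥ 1 := by linarith
        rw [abs_of_nonneg (by linarith)]; linarith
      · have hj2 : i + 2 ≤ j := by omega
        have : ((i:ℝ)+2) ≤ (j:ℝ) := by exact_mod_cast hj2
        have : (n:ℝ)*t - j ≤ -1 := by linarith
        rw [abs_of_nonpos (by linarith)]; linarith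
    rw [hatF, max_eq_left habs, zero_smul]

theorem plF_node (n i : ℕ) (hn : 0 < n) (hi : i ≤ n) (V : ℕ → Matrix (Fin d) (Fin d) ℝ) :
    plF n V ((i:ℝ)/n) = V i := by
  have hn' : (0:ℝ) < n := by exact_mod_cast hn
  rcases Nat.lt_or_ge i n with h | h
  · have hp := plF_piece n i hn h V (le_refl ((i:ℝ)/n))
      (by gcongr ?_/?_ <;> linarith)
    have hz : (n:ℝ) * ((i:ℝ)/n) - i = 0 := by field_simp; ring
    rw [hp, hz]
    simp
  · have hin : i = n := le_antisymm hi h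
    subst hin
    have hi1 : (1:ℕ) ≤ i := hn
    have hc : ((i - 1 : ℕ) : ℝ) = (i:ℝ) - 1 := by push_cast [Nat.cast_sub hi1]; ring
    have hb1 : ((i-1 : ℕ):ℝ)/i ≤ (i:ℝ)/i := by gcongr ?_/?_; rw [hc]; linarith
    have hb2 : ((i:ℝ))/i ≤ (((i-1:ℕ):ℝ)+1)/i := by rw [hc]; gcongr ?_/?_ <;> linarith
    have hp := plF_piece i (i-1) hn (by omega) V hb1 hb2
    have hz : (i:ℝ) * ((i:ℝ)/i) - ((i-1:ℕ):ℝ) = 1 := by rw [hc]; field_simp; ring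
    rw [hp, hz]
    have : i - 1 + 1 = i := by omega
    rw [this]
    simp


theorem cover_exists (n : ℕ) (hn : 0 < n) {t : ℝ} (ht : t ∈ Set.Icc (0:ℝ) 1) :
    ∃ i, i < n ∧ (i:ℝ)/n ≤ t ∧ t ≤ ((i:ℝ)+1)/n := by
  have hn' : (0:ℝ) < n := by exact_mod_cast hn
  obtain ⟨ht0, ht1⟩ := ht
  refine ⟨min ⌊(n:ℝ)*t⌋₊ (n-1), by omega, ?_, ?_⟩
  · rcases min_cases ⌊(n:ℝ)*t⌋₊ (n-1) with ⟨hm, _⟩ | ⟨hm, hlt⟩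
    · rw [hm, div_le_iff₀ hn']
      calc ((⌊(n:ℝ)*t⌋₊ : ℝ)) ≤ (n:ℝ)*t := Nat.floor_le (by positivity)
      _ = t * n := by ring
    · rw [hm, div_le_iff₀ hn']
      have h1 : ((n:ℕ) - 1 : ℕ) < ⌊(n:ℝ)*t⌋₊ := hlt
      have h2 : (((n:ℕ) - 1 : ℕ) : ℝ) ≤ (n:ℝ)*t := by
        calc (((n:ℕ) - 1 : ℕ) : ℝ) ≤ ((⌊(n:ℝ)*t⌋₊ : ℕ) : ℝ) := by exact_mod_cast h1.le
        _ ≤ (n:ℝ)*t := Nat.floor_le (by positivity)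
      linarith [h2]
  · rcases min_cases ⌊(n:ℝ)*t⌋₊ (n-1) with ⟨hm, _⟩ | ⟨hm, _⟩
    · rw [hm, le_div_iff₀ hn']
      have h5 := Nat.lt_floor_add_one ((n:ℝ)*t)
      have : t * n = (n:ℝ) * t := mul_comm t n
      linarith
    · rw [hm, le_div_iff₀ hn']
      have hc : (((n - 1 : ℕ) : ℝ) + 1) = (n:ℝ) := by
        have : (1:ℕ) ≤ n := hn
        push_cast [Nat.cast_sub this]
        ring
      rw [hc]
      nlinarith


theorem piece_int (N : ℕ) (hNpos : 0 < N) (V : ℕ → Matrix (Fin d) (Fin d) ℝ)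
    (hVm : ∀ i, ∀ τ : MinorIdx d, minorIdxFn τ (V i) ≠ 0) (τ : MinorIdx d)
    (i : ℕ) (hiN : i < N) :
    IntegrableOn (fun t => |Real.log (|minorIdxFn τ (plF N V t)|)|)
      (Set.Icc ((i:ℝ)/N) (((i:ℝ)+1)/N)) volume := by
  have hN' : (0:ℝ) < N := by exact_mod_cast hNpos
  obtain ⟨p, hpe⟩ := exists_poly' (V i - (i:ℝ) • (V (i+1) - V i)) ((N:ℝ) • (V (i+1) - V i)) τ
  have hXN : ∀ t : ℝ, (V i - (i:ℝ) • (V (i+1) - V i)) + t • ((N:ℝ) • (V (i+1) - V i))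
      = (1 - ((N:ℝ)*t - i)) • V i + ((N:ℝ)*t - i) • V (i+1) := by
    intro t; module
  have hp0 : p ≠ 0 := by
    intro h0
    have h1 := hpe ((i:ℝ)/N)
    rw [h0, Polynomial.eval_zero, hXN] at h1
    have hz : (N:ℝ) * ((i:ℝ)/N) - i = 0 := by field_simp; ring
    rw [hz, sub_zero, one_smul, zero_smul, add_zero] at h1
    exact hVm i τ h1.symm
  have hle : (i:ℝ)/N ≤ ((i:ℝ)+1)/N := by gcongr ?_/?_ <;> linarith
  refine (polyAbsLogInt _ _ hle p hp0).congr_fun ?_ measurableSet_Icc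
  intro t htt
  show |Real.log (|p.eval t|)| = |Real.log (|minorIdxFn τ (plF N V t)|)|
  rw [hpe t, hXN t, ← plF_piece N i hNpos hiN V htt.1 htt.2]

theorem TwAux.exists_pl (H₀ : ℝ → Matrix (Fin d) (Fin d) ℝ) (hc : Continuous H₀)
    (hper : ∀ t, H₀ (t+1) = H₀ t) (κ : ℝ) (hκ : 0 < κ) :
    ∃ pl : ℝ → Matrix (Fin d) (Fin d) ℝ, Continuous pl ∧ pl 0 = pl 1 ∧
      (∀ t ∈ Set.Icc (0:ℝ) 1, ‖pl t - H₀ t‖ < κ) ∧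
      (∀ τ : MinorIdx d, IntegrableOn
        (fun t => |Real.log (|minorIdxFn τ (pl t)|)|) (Set.Icc (0:ℝ) 1) volume) := by
  -- uniform continuity
  have huc : UniformContinuousOn H₀ (Set.Icc (0:ℝ) 1) :=
    isCompact_Icc.uniformContinuousOn_of_continuous hc.continuousOn
  rw [Metric.uniformContinuousOn_iff] at huc
  obtain ⟨η, hη, hucd⟩ := huc (κ/2) (by linarith)
  obtain ⟨n₀, hn₀⟩ := exists_nat_one_div_lt hη
  set N := n₀ + 1 with hN
  have hNpos : 0 < N := Nat.succ_pos _
  have hN' : (0:ℝ) < N := by exact_mod_cast hNpos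
  have hsmall : 1/(N:ℝ) < η := by exact_mod_cast hn₀
  -- choose vertex matrices
  have hch : ∀ j : ℕ, ∃ M' : Matrix (Fin d) (Fin d) ℝ,
      ‖M' - H₀ ((j:ℝ)/N)‖ < κ/2 ∧ ∀ τ : MinorIdx d, minorIdxFn τ M' ≠ 0 :=
    fun j => allminors_dense _ _ (by linarith)
  choose V' hV'c hV'm using hch
  set V : ℕ → Matrix (Fin d) (Fin d) ℝ := fun i => V' (i % N) with hV
  have hVm : ∀ i, ∀ τ : MinorIdx d, minorIdxFn τ (V i) ≠ 0 := fun i => hV'm _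
  have hVnode : ∀ i ≤ N, ‖V i - H₀ ((i:ℝ)/N)‖ < κ/2 := by
    intro i hi
    rcases Nat.lt_or_ge i N with h | h
    · have : i % N = i := Nat.mod_eq_of_lt h
      simp only [hV, this]
      exact hV'c i
    · have hiN : i = N := le_antisymm hi h
      rw [hiN]
      have h2 : ((N:ℕ):ℝ)/(N:ℝ) = 1 := by field_simp
      have h3 : H₀ (((N:ℕ):ℝ)/(N:ℝ)) = H₀ (((0:ℕ):ℝ)/(N:ℝ)) := by
        rw [h2, (by norm_num : ((0:ℕ):ℝ)/(N:ℝ) = 0), (by ring : (1:ℝ) = 0 + 1), hper 0]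
      show ‖V' (N % N) - H₀ (((N:ℕ):ℝ)/(N:ℝ))‖ < κ/2
      rw [h3, Nat.mod_self]
      exact hV'c 0
  refine ⟨plF N V, plF_cont N V, ?_, ?_, ?_⟩
  · -- pl 0 = pl 1
    have h0 : plF N V 0 = V 0 := by
      have := plF_node N 0 hNpos (Nat.zero_le _) V
      simpa using this
    have h1 : plF N V 1 = V N := by
      have := plF_node N N hNpos le_rfl V
      rwa [(by field_simp : ((N:ℕ):ℝ)/(N:ℝ) = 1)] at this
    rw [h0, h1]
    simp [hV, Nat.mod_self]
  · -- closeness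
    intro t ht
    obtain ⟨i, hiN, hl, hr⟩ := cover_exists N hNpos ht
    have hp := plF_piece N i hNpos hiN V hl hr
    have hl2 : (i:ℝ) ≤ t * N := by rw [← div_le_iff₀ hN']; exact hl
    have hr2 : t * N ≤ (i:ℝ) + 1 := by rw [← le_div_iff₀ hN']; exact hr
    set s : ℝ := (N:ℝ)*t - i with hs
    have hs0 : 0 ≤ s := by rw [hs]; nlinarith
    have hs1 : s ≤ 1 := by rw [hs]; nlinarith
    have hsplit : plF N V t - H₀ t = (1-s) • (V i - H₀ t) + s • (V (i+1) - H₀ t) := by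
      rw [hp]; module
    have hnb : ∀ j, j ≤ N → |t - (j:ℝ)/N| ≤ 1/N →
        ‖V j - H₀ t‖ < κ := by
      intro j hj hclose
      have h1 : ‖V j - H₀ t‖ ≤ ‖V j - H₀ ((j:ℝ)/N)‖ + ‖H₀ ((j:ℝ)/N) - H₀ t‖ := by
        have : V j - H₀ t = (V j - H₀ ((j:ℝ)/N)) + (H₀ ((j:ℝ)/N) - H₀ t) := by abel
        rw [this]; exact norm_add_le _ _
      have h2 : ‖H₀ ((j:ℝ)/N) - H₀ t‖ < κ/2 := by
        rw [← dist_eq_norm]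
        apply hucd ((j:ℝ)/N) ?_ t ht
        · rw [Real.dist_eq, abs_sub_comm]
          calc |t - (j:ℝ)/N| ≤ 1/N := hclose
          _ < η := hsmall
        · constructor
          · positivity
          · rw [div_le_one hN']; exact_mod_cast hj
      have h3 := hVnode j hj
      linarith
    have he : ((i:ℝ)+1)/N - (i:ℝ)/N = 1/N := by field_simp; ring
    have hl' : (i:ℝ)/N ≤ t := hl
    have hr' : t ≤ ((i:ℝ)+1)/N := hr
    have hbi : ‖V i - H₀ t‖ < κ := by
      apply hnb i hiN.le
      rw [abs_of_nonneg (by linarith)]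
      linarith
    have hbi1 : ‖V (i+1) - H₀ t‖ < κ := by
      apply hnb (i+1) hiN
      have hcast : ((i+1:ℕ):ℝ) = (i:ℝ)+1 := by push_cast; ring
      rw [hcast, abs_of_nonpos (by linarith)]
      linarith
    rw [hsplit]
    calc ‖(1-s) • (V i - H₀ t) + s • (V (i+1) - H₀ t)‖
        ≤ ‖(1-s) • (V i - H₀ t)‖ + ‖s • (V (i+1) - H₀ t)‖ := norm_add_le _ _
      _ = (1-s) * ‖V i - H₀ t‖ + s * ‖V (i+1) - H₀ t‖ := by
          rw [norm_smul, norm_smul, Real.norm_eq_abs, Real.norm_eq_abs,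
            abs_of_nonneg (by linarith), abs_of_nonneg hs0]
      _ < κ := by
          rcases le_or_gt s (1/2) with hhalf | hhalf
          · have h1 : (1-s) * ‖V i - H₀ t‖ < (1-s) * κ := by
              apply mul_lt_mul_of_pos_left hbi; linarith
            have h2 : s * ‖V (i+1) - H₀ t‖ ≤ s * κ := by nlinarith
            nlinarith
          · have h1 : (1-s) * ‖V i - H₀ t‖ ≤ (1-s) * κ := by nlinarith
            have h2 : s * ‖V (i+1) - H₀ t‖ < s * κ := by
              apply mul_lt_mul_of_pos_left hbi1; linarith
            nlinarith
  · -- integrability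
    intro τ
    have hcover : Set.Icc (0:ℝ) 1 ⊆ ⋃ i ∈ Finset.range N, Set.Icc ((i:ℝ)/N) (((i:ℝ)+1)/N) := by
      intro t ht
      obtain ⟨i, hiN, hl, hr⟩ := cover_exists N hNpos ht
      exact Set.mem_biUnion (Finset.mem_range.mpr hiN) ⟨hl, hr⟩
    refine IntegrableOn.mono_set ?_ hcover
    rw [integrableOn_finset_iUnion]
    exact fun i hi => piece_int N hNpos V hVm τ i (Finset.mem_range.mp hi)

end TwistingAux

/-- For a fixed continuous map `A₀ : S¹ → GL_d(ℝ)`, the set of continuous maps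
`A₁ : S¹ → GL_d(ℝ)` twisting with respect to `A₀` is dense for the uniform distance. -/
theorem twisting_dense_C0 (d : ℕ) (hd : 2 ≤ d) (θ₀ θ₁ : ℝ)
    (A₀ : ℝ → Matrix (Fin d) (Fin d) ℝ) (hA₀ : IsC0GL A₀) :
    ∀ A₁, IsC0GL A₁ → ∀ ε > 0,
      ∃ B₁, IsC0GL B₁ ∧ dC0Map A₁ B₁ < ε ∧ Twisting θ₀ θ₁ A₀ B₁ := by
  obtain ⟨hA₀c, hA₀p, hA₀d⟩ := hA₀
  intro A₁ hA₁ ε hε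
  obtain ⟨hA₁c, hA₁p, hA₁d⟩ := hA₁
  -- the shifted A₀ and its inverse
  set g : ℝ → Matrix (Fin d) (Fin d) ℝ := fun t => A₀ (t + θ₁ - θ₀) with hg
  have hgc : Continuous g := hA₀c.comp (by continuity)
  have hgd : ∀ t, (g t).det ≠ 0 := fun t => hA₀d _
  have hgp : ∀ t, g (t+1) = g t := by
    intro t
    show A₀ (t + 1 + θ₁ - θ₀) = A₀ (t + θ₁ - θ₀)
    rw [(by ring : t + 1 + θ₁ - θ₀ = (t + θ₁ - θ₀) + 1), hA₀p]
  have hginvc : Continuous (fun t => (g t)⁻¹) := by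
    simp only [Matrix.inv_def, Ring.inverse_eq_inv']
    exact ((hgc.matrix_det.inv₀ hgd).smul (hgc.matrix_adjugate))
  -- H₀
  set H₀ : ℝ → Matrix (Fin d) (Fin d) ℝ := fun t => (g t)⁻¹ * A₁ t with hH₀
  have hH₀c : Continuous H₀ := hginvc.mul hA₁c
  have hH₀p : ∀ t, H₀ (t+1) = H₀ t := by
    intro t; show (g (t+1))⁻¹ * A₁ (t+1) = _; rw [hgp, hA₁p]
  have hA₁fac : ∀ t, A₁ t = g t * H₀ t := by
    intro t
    rw [hH₀, Matrix.mul_nonsing_inv_cancel_left _ _ (isUnit_iff_ne_zero.mpr (hgd t))]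
  -- determinant lower bound via thickening
  have hKc : IsCompact (H₀ '' Set.Icc (0:ℝ) 1) := (isCompact_Icc).image hH₀c
  have hUo : IsOpen {M : Matrix (Fin d) (Fin d) ℝ | M.det ≠ 0} :=
    isOpen_compl_singleton.preimage (continuous_id.matrix_det)
  have hKU : H₀ '' Set.Icc (0:ℝ) 1 ⊆ {M | M.det ≠ 0} := by
    rintro _ ⟨t, _, rfl⟩
    show (H₀ t).det ≠ 0
    rw [hH₀]
    simp only [Matrix.det_mul]
    refine mul_ne_zero ?_ (hA₁d t)
    rw [Matrix.det_nonsing_inv]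
    simpa using (hgd t)
  obtain ⟨δ₀, hδ₀, hthick⟩ := hKc.exists_thickening_subset_open hUo hKU
  -- bound on ‖g‖
  obtain ⟨C₀, hC₀⟩ : ∃ C, ∀ t ∈ Set.Icc (0:ℝ) 1, ‖g t‖ ≤ C :=
    isCompact_Icc.exists_bound_of_continuousOn hgc.continuousOn
  have hC₀0 : 0 ≤ C₀ := le_trans (norm_nonneg _) (hC₀ 0 (by norm_num))
  set κ := min δ₀ (ε / (C₀ + 1)) with hκdef
  have hκ : 0 < κ := lt_min hδ₀ (by positivity)
  obtain ⟨pl, hplc, hpl01, hplclose, hplint⟩ := TwAux.exists_pl H₀ hH₀c hH₀p κ hκ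
  -- periodic extension
  set H : ℝ → Matrix (Fin d) (Fin d) ℝ :=
    fun t => AddCircle.liftIco (1:ℝ) 0 pl (t : AddCircle (1:ℝ)) with hHdef
  have hHc : Continuous H := by
    have h2 : ContinuousOn pl (Set.Icc 0 (0+1)) := by simpa using hplc.continuousOn
    exact (AddCircle.liftIco_continuous (by simpa using hpl01) h2).comp
      (AddCircle.continuous_mk' 1)
  have hHIco : ∀ t ∈ Set.Ico (0:ℝ) 1, H t = pl t := by
    intro t ht
    exact AddCircle.liftIco_coe_apply (by simpa using ht)
  have hHp : ∀ t, H (t+1) = H t := by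
    intro t; show AddCircle.liftIco _ _ _ _ = _
    rw [AddCircle.coe_add_period]
  have hHIcc : ∀ t ∈ Set.Icc (0:ℝ) 1, H t = pl t := by
    intro t ht
    rcases eq_or_lt_of_le ht.2 with rfl | hlt
    · have h1 : H 1 = H 0 := by rw [← hHp 0, zero_add]
      rw [h1, hHIco 0 (by norm_num), hpl01]
    · exact hHIco t ⟨ht.1, hlt⟩
  have hHrange : ∀ t : ℝ, ∃ x ∈ Set.Ico (0:ℝ) 1, H t = pl x := by
    intro t
    refine ⟨(AddCircle.equivIco 1 0 (t : AddCircle (1:ℝ)) : ℝ), ?_, rfl⟩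
    have := (AddCircle.equivIco 1 0 (t : AddCircle (1:ℝ))).2
    simpa using this
  -- dets of pl near H₀ are nonzero
  have hpldet : ∀ x ∈ Set.Icc (0:ℝ) 1, (pl x).det ≠ 0 := by
    intro x hx
    have h1 : pl x ∈ Metric.thickening δ₀ (H₀ '' Set.Icc (0:ℝ) 1) := by
      rw [Metric.mem_thickening_iff]
      refine ⟨H₀ x, Set.mem_image_of_mem _ hx, ?_⟩
      rw [dist_eq_norm]
      exact lt_of_lt_of_le (hplclose x hx) (min_le_left _ _)
    exact hthick h1
  set B₁ : ℝ → Matrix (Fin d) (Fin d) ℝ := fun t => g t * H t with hB₁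
  refine ⟨B₁, ⟨hgc.mul hHc, ?_, ?_⟩, ?_, ?_⟩
  · intro t
    show g (t+1) * H (t+1) = g t * H t
    rw [hgp, hHp]
  · intro t
    show (g t * H t).det ≠ 0
    rw [Matrix.det_mul]
    refine mul_ne_zero (hgd t) ?_
    obtain ⟨x, hx, hHx⟩ := hHrange t
    rw [hHx]
    exact hpldet x ⟨hx.1, hx.2.le⟩
  · -- dC0Map
    rw [dC0Map]
    have hb : ∀ t : Set.Icc (0:ℝ) 1, ‖A₁ t - B₁ t‖ ≤ C₀ * κ := by
      intro ⟨t, ht⟩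
      show ‖A₁ t - B₁ t‖ ≤ C₀ * κ
      have h1 : A₁ t - B₁ t = g t * (H₀ t - H t) := by
        rw [Matrix.mul_sub, ← hA₁fac t]
      rw [h1, hHIcc t ht]
      calc ‖g t * (H₀ t - pl t)‖ ≤ ‖g t‖ * ‖H₀ t - pl t‖ := norm_mul_le _ _
        _ ≤ C₀ * κ := by
            apply mul_le_mul (hC₀ t ht) ?_ (norm_nonneg _) hC₀0
            rw [← norm_neg, neg_sub]
            exact (hplclose t ht).le
    calc (⨆ t : Set.Icc (0:ℝ) 1, ‖A₁ t - B₁ t‖) ≤ C₀ * κ := ciSup_le hb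
      _ ≤ C₀ * (ε / (C₀ + 1)) := by
          apply mul_le_mul_of_nonneg_left (min_le_right _ _) hC₀0
      _ < ε := by
          rw [mul_div_assoc']
          rw [div_lt_iff₀ (by positivity)]
          nlinarith
  · -- Twisting
    intro I J hI h
    have hint := hplint ⟨⟨I, J⟩, h⟩
    refine hint.congr_fun ?_ measurableSet_Icc
    intro t ht
    have h1 : (g t)⁻¹ * B₁ t = H t := by
      rw [hB₁, Matrix.nonsing_inv_mul_cancel_left _ _ (isUnit_iff_ne_zero.mpr (hgd t))]
    show |Real.log (|minorIdxFn ⟨⟨I, J⟩, h⟩ (pl t)|)| = _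
    rw [minorIdxFn, minorFn, ← hHIcc t ht, ← h1]
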